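/- Let f : I × ℝ² → ℝ satisfy: (H1) for each x,y ∈ ℝ the map t ↦ f(t,x,y) is measurable on I; (H2) for each compact K ⊂ ℝ² there exists ψ_K ∈ L¹(I,[0,∞)) with |f(t,x,y)| ≤ ψ_K(t) for all (x,y) ∈ K; and suppose there exist nonnegative integrable functions L₁,L₂ on I with |f(t,x,y) − f(t,x̄,ȳ)| ≤ L₁(t)|x−x̄| + L₂(t)|y−ȳ| for all t ∈ I and all x,y,x̄,ȳ ∈ ℝ. Then for all u,v ∈ C([−r,T]), the operator G from problem (p) satisfies ‖Gu − Gv‖ ≤ 2·(∫₀ᵀ (T−s)(L₁(s)+L₂(s)) ds)·‖u − v‖, where ‖·‖ denotes the supremum norm on [−r,T]. -/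

import Mathlib

open MeasureTheory Set intervalIntegral Real Filter Topology

noncomputable section

/-- `u` restricted to `[0,T]` belongs to `W^{2,1}`, with (a.e.) second derivative `g`:
`u` is differentiable on `[0,T]` and its derivative `v` is the integral of the
integrable function `g`. -/
def IsW21On (T : ℝ) (u g : ℝ → ℝ) : Prop :=
  IntegrableOn g (Icc (0:ℝ) T) ∧
  ∃ v : ℝ → ℝ,
    (∀ t ∈ Icc (0:ℝ) T, HasDerivWithinAt u (v t) (Icc (0:ℝ) T) t) ∧
    (∀ t ∈ Icc (0:ℝ) T, v t = v 0 + ∫ s in (0:ℝ)..t, g s)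

/-- `u ∈ 𝒳` and `u` is a solution of problem (p). -/
def IsSolutionP (T r B : ℝ) (τ φ : ℝ → ℝ) (f : ℝ → ℝ → ℝ → ℝ) (u : ℝ → ℝ) : Prop :=
  ContinuousOn u (Icc (-r) T) ∧
  (∃ g : ℝ → ℝ, IsW21On T u g ∧
    ∀ᵐ t ∂(volume.restrict (Icc (0:ℝ) T)), -g t = f t (u t) (u (τ t))) ∧
  (∀ t ∈ Icc (-r) (0:ℝ), u t = φ t) ∧ u T = B

/-- Condition (C₁). -/
def CondC1 (T : ℝ) (L1 L2 : ℝ → ℝ) : Prop :=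
  MemLp L1 ⊤ (volume.restrict (Icc (0:ℝ) T)) ∧ MemLp L2 ⊤ (volume.restrict (Icc (0:ℝ) T)) ∧
  eLpNorm (fun t => L1 t + L2 t) ⊤ (volume.restrict (Icc (0:ℝ) T)) < ENNReal.ofReal (1 / T ^ 2)

/-- Condition (C₂). -/
def CondC2 (T : ℝ) (L1 L2 : ℝ → ℝ) : Prop :=
  MemLp L1 2 (volume.restrict (Icc (0:ℝ) T)) ∧ MemLp L2 2 (volume.restrict (Icc (0:ℝ) T)) ∧
  eLpNorm (fun t => L1 t + L2 t) 2 (volume.restrict (Icc (0:ℝ) T)) <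
    ENNReal.ofReal (Real.sqrt (3 / (2 * T ^ 3)))

/-- Condition (C₃). -/
def CondC3 (T : ℝ) (L1 L2 : ℝ → ℝ) : Prop :=
  IntegrableOn L1 (Icc (0:ℝ) T) ∧ IntegrableOn L2 (Icc (0:ℝ) T) ∧
  (∫ t in (0:ℝ)..T, (L1 t + L2 t)) < 1 / (2 * T)

/-- Condition (Ĉ₁). -/
def CondC1hat (T : ℝ) (L1 L2 : ℝ → ℝ) : Prop :=
  MemLp L1 ⊤ (volume.restrict (Icc (0:ℝ) T)) ∧ MemLp L2 ⊤ (volume.restrict (Icc (0:ℝ) T)) ∧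
  eLpNorm (fun t => L1 t + L2 t) ⊤ (volume.restrict (Icc (0:ℝ) T)) < ENNReal.ofReal (2 / T ^ 2)

/-- Condition (Ĉ₂). -/
def CondC2hat (T : ℝ) (L1 L2 : ℝ → ℝ) : Prop :=
  MemLp L1 2 (volume.restrict (Icc (0:ℝ) T)) ∧ MemLp L2 2 (volume.restrict (Icc (0:ℝ) T)) ∧
  eLpNorm (fun t => L1 t + L2 t) 2 (volume.restrict (Icc (0:ℝ) T)) <
    ENNReal.ofReal (Real.sqrt 2 / T)

/-- Condition (Ĉ₃). -/
def CondC3hat (T : ℝ) (L1 L2 : ℝ → ℝ) : Prop :=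
  IntegrableOn L1 (Icc (0:ℝ) T) ∧ IntegrableOn L2 (Icc (0:ℝ) T) ∧
  (∫ t in (0:ℝ)..T, (L1 t + L2 t)) < 1 / T

/-- Lower solution of problem (p). -/
def IsLowerSolutionP (T r B : ℝ) (τ φ : ℝ → ℝ) (f : ℝ → ℝ → ℝ → ℝ) (α : ℝ → ℝ) : Prop :=
  ContinuousOn α (Icc (-r) T) ∧
  AEMeasurable (fun t => f t (α t) (α (τ t))) (volume.restrict (Icc (0:ℝ) T)) ∧
  (∃ g : ℝ → ℝ, IsW21On T α g ∧
    ∀ᵐ t ∂(volume.restrict (Icc (0:ℝ) T)), -g t ≤ f t (α t) (α (τ t))) ∧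
  (∀ t ∈ Icc (-r) (0:ℝ), α t ≤ φ t ∧ φ t - α t ≤ φ 0 - α 0) ∧ α T ≤ B

/-- Upper solution of problem (p). -/
def IsUpperSolutionP (T r B : ℝ) (τ φ : ℝ → ℝ) (f : ℝ → ℝ → ℝ → ℝ) (β : ℝ → ℝ) : Prop :=
  ContinuousOn β (Icc (-r) T) ∧
  AEMeasurable (fun t => f t (β t) (β (τ t))) (volume.restrict (Icc (0:ℝ) T)) ∧
  (∃ g : ℝ → ℝ, IsW21On T β g ∧
    ∀ᵐ t ∂(volume.restrict (Icc (0:ℝ) T)), f t (β t) (β (τ t)) ≤ -g t) ∧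
  (∀ t ∈ Icc (-r) (0:ℝ), φ t ≤ β t ∧ β t - φ t ≤ β 0 - φ 0) ∧ B ≤ β T

/-- The operator `G` associated with problem (p). -/
def Gop (T B : ℝ) (τ φ : ℝ → ℝ) (f : ℝ → ℝ → ℝ → ℝ) (u : ℝ → ℝ) (t : ℝ) : ℝ :=
  if t ≤ 0 then φ t
  else φ 0 + ((B - φ 0 + ∫ s in (0:ℝ)..T, (T - s) * f s (u s) (u (τ s))) / T) * t
    - ∫ s in (0:ℝ)..t, (t - s) * f s (u s) (u (τ s))



private lemma floor_approx_aux {c x : ℝ} (hc : 0 < c) : |(⌊c * x⌋ : ℝ) / c - x| ≤ 1 / c := by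
  have h1 : (⌊c * x⌋ : ℝ) ≤ c * x := Int.floor_le _
  have h2 : c * x < (⌊c * x⌋ : ℝ) + 1 := Int.lt_floor_add_one _
  have heq : (⌊c * x⌋ : ℝ) / c - x = ((⌊c * x⌋ : ℝ) - c * x) / c := by field_simp
  rw [heq, abs_div, abs_of_pos hc, div_le_div_iff_of_pos_right hc]
  rw [abs_le]
  constructor <;> linarith

private lemma aemeas_comp_f {T : ℝ} {f : ℝ → ℝ → ℝ → ℝ}
    (H1 : ∀ x y : ℝ, AEMeasurable (fun t => f t x y) (volume.restrict (Icc (0:ℝ) T)))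
    {L1 L2 : ℝ → ℝ}
    (hL1nn : ∀ t ∈ Icc (0:ℝ) T, 0 ≤ L1 t) (hL2nn : ∀ t ∈ Icc (0:ℝ) T, 0 ≤ L2 t)
    (H3 : ∀ t ∈ Icc (0:ℝ) T, ∀ x y x' y' : ℝ,
      |f t x y - f t x' y'| ≤ L1 t * |x - x'| + L2 t * |y - y'|)
    {w1 w2 : ℝ → ℝ} (hw1 : AEMeasurable w1 (volume.restrict (Icc (0:ℝ) T)))
    (hw2 : AEMeasurable w2 (volume.restrict (Icc (0:ℝ) T))) :
    AEMeasurable (fun t => f t (w1 t) (w2 t)) (volume.restrict (Icc (0:ℝ) T)) := by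
  set μ := volume.restrict (Icc (0:ℝ) T) with hμ
  set a := hw1.mk w1 with ha'
  set b := hw2.mk w2 with hb'
  have ha : Measurable a := hw1.measurable_mk
  have hb : Measurable b := hw2.measurable_mk
  set F : ℕ → ℝ → ℝ := fun n t =>
    f t ((⌊((n:ℝ)+1) * a t⌋ : ℝ) / ((n:ℝ)+1)) ((⌊((n:ℝ)+1) * b t⌋ : ℝ) / ((n:ℝ)+1)) with hF
  have hFn : ∀ n : ℕ, AEMeasurable (F n) μ := by
    intro n
    set c : ℝ := (n:ℝ) + 1 with hc
    set k : ℝ → ℤ × ℤ := fun t => (⌊c * a t⌋, ⌊c * b t⌋) with hk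
    have hkm : Measurable k :=
      ((measurable_const.mul ha).floor).prodMk ((measurable_const.mul hb).floor)
    have hGz : ∀ z : ℤ × ℤ, ∃ g : ℝ → ℝ, Measurable g ∧
        (fun t => f t ((z.1 : ℝ) / c) ((z.2 : ℝ) / c)) =ᵐ[μ] g := fun z => H1 _ _
    choose G hGmeas hGeq using hGz
    have hGm : Measurable (fun p : ℝ × (ℤ × ℤ) => G p.2 p.1) :=
      measurable_from_prod_countable_left fun z => hGmeas z
    have hm : Measurable (fun t => G (k t) t) :=
      hGm.comp (measurable_id.prodMk hkm)
    refine hm.aemeasurable.congr ?_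
    have hae : ∀ᵐ t ∂μ, ∀ z : ℤ × ℤ, G z t = f t ((z.1 : ℝ) / c) ((z.2 : ℝ) / c) := by
      rw [ae_all_iff]
      intro z
      exact (hGeq z).symm
    filter_upwards [hae] with t ht
    exact ht (k t)
  have htend : ∀ᵐ t ∂μ, Tendsto (fun n => F n t) atTop (𝓝 (f t (a t) (b t))) := by
    filter_upwards [ae_restrict_mem measurableSet_Icc] with t ht
    have key : ∀ n : ℕ, |F n t - f t (a t) (b t)| ≤ (L1 t + L2 t) / ((n:ℝ)+1) := by
      intro n
      have hc : (0:ℝ) < (n:ℝ) + 1 := by positivity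
      have h1 : |(⌊((n:ℝ)+1) * a t⌋ : ℝ) / ((n:ℝ)+1) - a t| ≤ 1 / ((n:ℝ)+1) :=
        floor_approx_aux hc
      have h2 : |(⌊((n:ℝ)+1) * b t⌋ : ℝ) / ((n:ℝ)+1) - b t| ≤ 1 / ((n:ℝ)+1) :=
        floor_approx_aux hc
      have hL1 := hL1nn t ht
      have hL2 := hL2nn t ht
      calc |F n t - f t (a t) (b t)|
          ≤ L1 t * |(⌊((n:ℝ)+1) * a t⌋ : ℝ) / ((n:ℝ)+1) - a t| +
            L2 t * |(⌊((n:ℝ)+1) * b t⌋ : ℝ) / ((n:ℝ)+1) - b t| := H3 t ht _ _ _ _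
        _ ≤ L1 t * (1 / ((n:ℝ)+1)) + L2 t * (1 / ((n:ℝ)+1)) :=
            add_le_add (mul_le_mul_of_nonneg_left h1 hL1) (mul_le_mul_of_nonneg_left h2 hL2)
        _ = (L1 t + L2 t) / ((n:ℝ)+1) := by ring
    have hlim : Tendsto (fun n : ℕ => (L1 t + L2 t) / ((n:ℝ)+1)) atTop (𝓝 0) := by
      apply Tendsto.div_atTop (tendsto_const_nhds)
      exact tendsto_atTop_add_const_right _ 1 tendsto_natCast_atTop_atTop
    rw [tendsto_iff_norm_sub_tendsto_zero]
    refine squeeze_zero_norm (fun n => ?_) hlim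
    simpa [Real.norm_eq_abs] using key n
  have hab : AEMeasurable (fun t => f t (a t) (b t)) μ :=
    aemeasurable_of_tendsto_metrizable_ae atTop hFn htend
  refine hab.congr ?_
  filter_upwards [hw1.ae_eq_mk, hw2.ae_eq_mk] with t h1 h2
  show f t (a t) (b t) = f t (w1 t) (w2 t)
  simp only [ha', hb', ← h1, ← h2]

/-- Contraction-type estimate for the operator `G`: for all `u, v ∈ C([-r,T])`,
`‖Gu − Gv‖ ≤ 2 (∫₀ᵀ (T−s)(L₁(s)+L₂(s)) ds) ‖u − v‖` in the supremum norm on `[-r,T]`. -/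
theorem Gop_lipschitz_estimate
    (T r B : ℝ) (hT : 0 < T) (hr : 0 ≤ r)
    (τ φ : ℝ → ℝ) (hτmeas : Measurable τ) (hτmaps : ∀ t ∈ Icc (0:ℝ) T, τ t ∈ Icc (-r) T)
    (hφ : ContinuousOn φ (Icc (-r) (0:ℝ)))
    (f : ℝ → ℝ → ℝ → ℝ)
    (H1 : ∀ x y : ℝ, AEMeasurable (fun t => f t x y) (volume.restrict (Icc (0:ℝ) T)))
    (H2 : ∀ K : Set (ℝ × ℝ), IsCompact K → ∃ ψ : ℝ → ℝ,
      IntegrableOn ψ (Icc (0:ℝ) T) ∧ (∀ t ∈ Icc (0:ℝ) T, 0 ≤ ψ t) ∧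
      ∀ t ∈ Icc (0:ℝ) T, ∀ p ∈ K, |f t p.1 p.2| ≤ ψ t)
    (L1 L2 : ℝ → ℝ)
    (hL1nn : ∀ t ∈ Icc (0:ℝ) T, 0 ≤ L1 t) (hL2nn : ∀ t ∈ Icc (0:ℝ) T, 0 ≤ L2 t)
    (hL1int : IntegrableOn L1 (Icc (0:ℝ) T)) (hL2int : IntegrableOn L2 (Icc (0:ℝ) T))
    (H3 : ∀ t ∈ Icc (0:ℝ) T, ∀ x y x' y' : ℝ,
      |f t x y - f t x' y'| ≤ L1 t * |x - x'| + L2 t * |y - y'|)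
    (u v : ℝ → ℝ) (hu : ContinuousOn u (Icc (-r) T)) (hv : ContinuousOn v (Icc (-r) T)) :
    ∀ t ∈ Icc (-r) T,
      |Gop T B τ φ f u t - Gop T B τ φ f v t| ≤
        2 * (∫ s in (0:ℝ)..T, (T - s) * (L1 s + L2 s)) *
          sSup ((fun t => |u t - v t|) '' Icc (-r) T) := by
  intro t ht
  have hrT : -r ≤ T := by linarith
  have hr0 : -r ≤ (0:ℝ) := by linarith
  have hsub : Icc (0:ℝ) T ⊆ Icc (-r) T := Icc_subset_Icc hr0 le_rfl
  have hbdd : BddAbove ((fun t => |u t - v t|) '' Icc (-r) T) :=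
    (isCompact_Icc.image_of_continuousOn ((hu.sub hv).abs)).bddAbove
  set M := sSup ((fun t => |u t - v t|) '' Icc (-r) T) with hMdef
  have hMle : ∀ s ∈ Icc (-r) T, |u s - v s| ≤ M := fun s hs => le_csSup hbdd ⟨s, hs, rfl⟩
  have hM0 : 0 ≤ M := (abs_nonneg _).trans (hMle T ⟨hrT, le_rfl⟩)
  have hcomp : ∀ w : ℝ → ℝ, ContinuousOn w (Icc (-r) T) →
      IntegrableOn (fun s => f s (w s) (w (τ s))) (Icc (0:ℝ) T) := by
    intro w hw
    have hw1 : AEMeasurable w (volume.restrict (Icc (0:ℝ) T)) :=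
      ((hw.mono hsub).aemeasurable measurableSet_Icc)
    have hwe : Continuous (IccExtend hrT (fun x : Icc (-r) T => w x)) :=
      Continuous.Icc_extend' (continuousOn_iff_continuous_restrict.mp hw)
    have hw2 : AEMeasurable (fun s => w (τ s)) (volume.restrict (Icc (0:ℝ) T)) := by
      have hm : Measurable (fun s => IccExtend hrT (fun x : Icc (-r) T => w x) (τ s)) :=
        hwe.measurable.comp hτmeas
      refine hm.aemeasurable.congr ?_
      filter_upwards [ae_restrict_mem measurableSet_Icc] with s hs
      rw [IccExtend_of_mem hrT _ (hτmaps s hs)]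
    have hmeas : AEMeasurable (fun s => f s (w s) (w (τ s))) (volume.restrict (Icc (0:ℝ) T)) :=
      aemeas_comp_f H1 hL1nn hL2nn H3 hw1 hw2
    obtain ⟨ψ, hψint, hψnn, hψbd⟩ := H2 ((w '' Icc (-r) T) ×ˢ (w '' Icc (-r) T))
      ((isCompact_Icc.image_of_continuousOn hw).prod (isCompact_Icc.image_of_continuousOn hw))
    refine Integrable.mono' hψint hmeas.aestronglyMeasurable ?_
    filter_upwards [ae_restrict_mem measurableSet_Icc] with s hs
    exact hψbd s hs (w s, w (τ s)) ⟨⟨s, hsub hs, rfl⟩, ⟨τ s, hτmaps s hs, rfl⟩⟩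
  have hFu := hcomp u hu
  have hFv := hcomp v hv
  set Δ : ℝ → ℝ := fun s => f s (u s) (u (τ s)) - f s (v s) (v (τ s)) with hΔdef
  have hΔ : IntegrableOn Δ (Icc (0:ℝ) T) := hFu.sub hFv
  have hΔle : ∀ s ∈ Icc (0:ℝ) T, |Δ s| ≤ (L1 s + L2 s) * M := by
    intro s hs
    have h1 := H3 s hs (u s) (u (τ s)) (v s) (v (τ s))
    calc |Δ s| = |f s (u s) (u (τ s)) - f s (v s) (v (τ s))| := by rw [hΔdef]
      _ ≤ L1 s * |u s - v s| + L2 s * |u (τ s) - v (τ s)| := h1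
      _ ≤ L1 s * M + L2 s * M :=
          add_le_add (mul_le_mul_of_nonneg_left (hMle s (hsub hs)) (hL1nn s hs))
            (mul_le_mul_of_nonneg_left (hMle (τ s) (hτmaps s hs)) (hL2nn s hs))
      _ = (L1 s + L2 s) * M := by ring
  have hmulF : ∀ (c : ℝ) (g : ℝ → ℝ), IntegrableOn g (Icc (0:ℝ) T) →
      IntegrableOn (fun s => (c - s) * g s) (Icc (0:ℝ) T) := by
    intro c g hg
    refine Integrable.mono' ((hg.abs).const_mul (|c| + T)) ?_ ?_
    · exact ((continuous_const.sub continuous_id).aestronglyMeasurable).mul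
        hg.aestronglyMeasurable
    · filter_upwards [ae_restrict_mem measurableSet_Icc] with s hs
      have h1 : |c - s| ≤ |c| + T := by
        have := abs_sub c s
        have hsabs : |s| ≤ T := by rw [abs_of_nonneg hs.1]; exact hs.2
        linarith
      calc ‖(c - s) * g s‖ = |c - s| * |g s| := abs_mul _ _
        _ ≤ (|c| + T) * |g s| := mul_le_mul_of_nonneg_right h1 (abs_nonneg _)
  have hII : ∀ (g : ℝ → ℝ), IntegrableOn g (Icc (0:ℝ) T) →
      ∀ t' : ℝ, 0 ≤ t' → t' ≤ T → IntervalIntegrable g volume 0 t' := by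
    intro g hg t' h0 hT'
    rw [intervalIntegrable_iff_integrableOn_Icc_of_le h0]
    exact hg.mono_set (Icc_subset_Icc le_rfl hT')
  set gM : ℝ → ℝ := fun s => (T - s) * ((L1 s + L2 s) * M) with hgMdef
  have hgMint : IntegrableOn gM (Icc (0:ℝ) T) := hmulF T _ ((hL1int.add hL2int).mul_const M)
  have hgMnn : ∀ s ∈ Icc (0:ℝ) T, 0 ≤ gM s := by
    intro s hs
    have : 0 ≤ T - s := by linarith [hs.2]
    exact mul_nonneg this (mul_nonneg (add_nonneg (hL1nn s hs) (hL2nn s hs)) hM0)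
  have hI0nn : 0 ≤ ∫ s in (0:ℝ)..T, (T - s) * (L1 s + L2 s) :=
    intervalIntegral.integral_nonneg hT.le (fun s hs =>
      mul_nonneg (by linarith [hs.2]) (add_nonneg (hL1nn s hs) (hL2nn s hs)))
  have hI0 : (∫ s in (0:ℝ)..T, gM s) = (∫ s in (0:ℝ)..T, (T - s) * (L1 s + L2 s)) * M := by
    rw [← intervalIntegral.integral_mul_const]
    apply intervalIntegral.integral_congr
    intro s _
    simp only [hgMdef]
    ring
  by_cases hneg : t ≤ 0
  · have hz : Gop T B τ φ f u t - Gop T B τ φ f v t = 0 := by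
      simp only [Gop, if_pos hneg, sub_self]
    rw [hz, abs_zero]
    exact mul_nonneg (mul_nonneg (by norm_num) hI0nn) hM0
  · push_neg at hneg
    have ht0 : 0 ≤ t := hneg.le
    have htT : t ≤ T := ht.2
    have hIu : ∀ c : ℝ, IntervalIntegrable (fun s => (c - s) * f s (u s) (u (τ s)))
        volume 0 c → True := fun _ _ => trivial
    have hkey : Gop T B τ φ f u t - Gop T B τ φ f v t =
        (t / T) * (∫ s in (0:ℝ)..T, (T - s) * Δ s) - ∫ s in (0:ℝ)..t, (t - s) * Δ s := by
      have hA : (∫ s in (0:ℝ)..T, (T - s) * Δ s) =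
          (∫ s in (0:ℝ)..T, (T - s) * f s (u s) (u (τ s))) -
          (∫ s in (0:ℝ)..T, (T - s) * f s (v s) (v (τ s))) := by
        rw [← intervalIntegral.integral_sub (hII _ (hmulF T _ hFu) T hT.le le_rfl)
          (hII _ (hmulF T _ hFv) T hT.le le_rfl)]
        apply intervalIntegral.integral_congr
        intro s _
        simp only [hΔdef]
        ring
      have hB : (∫ s in (0:ℝ)..t, (t - s) * Δ s) =
          (∫ s in (0:ℝ)..t, (t - s) * f s (u s) (u (τ s))) -
          (∫ s in (0:ℝ)..t, (t - s) * f s (v s) (v (τ s))) := by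
        rw [← intervalIntegral.integral_sub (hII _ (hmulF t _ hFu) t ht0 htT)
          (hII _ (hmulF t _ hFv) t ht0 htT)]
        apply intervalIntegral.integral_congr
        intro s _
        simp only [hΔdef]
        ring
      simp only [Gop, if_neg (not_le.mpr hneg)]
      rw [hA, hB]
      ring
    have habs1 : |∫ s in (0:ℝ)..T, (T - s) * Δ s| ≤ ∫ s in (0:ℝ)..T, gM s := by
      calc |∫ s in (0:ℝ)..T, (T - s) * Δ s| ≤ ∫ s in (0:ℝ)..T, |(T - s) * Δ s| :=
            intervalIntegral.abs_integral_le_integral_abs hT.le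
        _ ≤ ∫ s in (0:ℝ)..T, gM s := by
            apply intervalIntegral.integral_mono_on hT.le
              (hII _ ((hmulF T _ hΔ).abs) T hT.le le_rfl) (hII _ hgMint T hT.le le_rfl)
            intro s hs
            have hTs : 0 ≤ T - s := by linarith [hs.2]
            calc |(T - s) * Δ s| = (T - s) * |Δ s| := by
                  rw [abs_mul, abs_of_nonneg hTs]
              _ ≤ (T - s) * ((L1 s + L2 s) * M) :=
                  mul_le_mul_of_nonneg_left (hΔle s hs) hTs
    have habs2 : |∫ s in (0:ℝ)..t, (t - s) * Δ s| ≤ ∫ s in (0:ℝ)..T, gM s := by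
      have hstep1 : |∫ s in (0:ℝ)..t, (t - s) * Δ s| ≤ ∫ s in (0:ℝ)..t, gM s := by
        calc |∫ s in (0:ℝ)..t, (t - s) * Δ s| ≤ ∫ s in (0:ℝ)..t, |(t - s) * Δ s| :=
              intervalIntegral.abs_integral_le_integral_abs ht0
          _ ≤ ∫ s in (0:ℝ)..t, gM s := by
              apply intervalIntegral.integral_mono_on ht0
                (hII _ ((hmulF t _ hΔ).abs) t ht0 htT) (hII _ hgMint t ht0 htT)
              intro s hs
              have hsT : s ∈ Icc (0:ℝ) T := ⟨hs.1, hs.2.trans htT⟩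
              have hts : 0 ≤ t - s := by linarith [hs.2]
              have hTs : 0 ≤ T - s := by linarith [hsT.2]
              calc |(t - s) * Δ s| = (t - s) * |Δ s| := by
                    rw [abs_mul, abs_of_nonneg hts]
                _ ≤ (T - s) * ((L1 s + L2 s) * M) := by
                    apply mul_le_mul (by linarith) (hΔle s hsT) (abs_nonneg _) hTs
      have hstep2 : (∫ s in (0:ℝ)..t, gM s) ≤ ∫ s in (0:ℝ)..T, gM s := by
        apply intervalIntegral.integral_mono_interval le_rfl ht0 htT
        · filter_upwards [ae_restrict_mem measurableSet_Ioc] with s hs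
          simpa using hgMnn s ⟨hs.1.le, hs.2⟩
        · exact hII _ hgMint T hT.le le_rfl
      exact hstep1.trans hstep2
    have htfrac0 : 0 ≤ t / T := div_nonneg ht0 hT.le
    have htfrac1 : t / T ≤ 1 := (div_le_one hT).2 htT
    calc |Gop T B τ φ f u t - Gop T B τ φ f v t|
        = |(t / T) * (∫ s in (0:ℝ)..T, (T - s) * Δ s) - ∫ s in (0:ℝ)..t, (t - s) * Δ s| := by
          rw [hkey]
      _ ≤ |(t / T) * (∫ s in (0:ℝ)..T, (T - s) * Δ s)| + |∫ s in (0:ℝ)..t, (t - s) * Δ s| :=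
          abs_sub _ _
      _ = (t / T) * |∫ s in (0:ℝ)..T, (T - s) * Δ s| + |∫ s in (0:ℝ)..t, (t - s) * Δ s| := by
          rw [abs_mul, abs_of_nonneg htfrac0]
      _ ≤ 1 * |∫ s in (0:ℝ)..T, (T - s) * Δ s| + |∫ s in (0:ℝ)..t, (t - s) * Δ s| :=
          add_le_add (mul_le_mul_of_nonneg_right htfrac1 (abs_nonneg _)) le_rfl
      _ = |∫ s in (0:ℝ)..T, (T - s) * Δ s| + |∫ s in (0:ℝ)..t, (t - s) * Δ s| := by
          rw [one_mul]
      _ ≤ (∫ s in (0:ℝ)..T, gM s) + (∫ s in (0:ℝ)..T, gM s) := add_le_add habs1 habs2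
      _ = 2 * (∫ s in (0:ℝ)..T, (T - s) * (L1 s + L2 s)) * M := by rw [hI0]; ring


end
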